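/- Let Π = V_m (so λ = m+1) and let T: V_m → ℂ_ν be a weight-ν covector (i.e., T(Hu) = ν T(u) for all u). Then for ε, δ ∈ {+1, -1} and every u ∈ V_m, (T ⊗ pr_ε) ∘ pr_{λ→λ+δ}(u ⊗ f_ε) = ((λ + δ(1 + εν))/(2λ)) · (Tu) ⊗ f_ε, where pr_ε: ℂ² → ℂ f_ε is the coordinate projection and pr_{λ→λ+δ} is the projection of V_m ⊗ ℂ² onto its Casimir eigenspace with eigenvalue (λ+δ)² - 1. -/

import Mathlib

open scoped TensorProduct

noncomputable section

/-- A (not necessarily bracket-compatible) action of the generators `H, X, Y`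
of `sl(2,ℂ)` on a complex vector space. -/
structure SL2Rep (V : Type*) [AddCommGroup V] [Module ℂ V] where
  H : Module.End ℂ V
  X : Module.End ℂ V
  Y : Module.End ℂ V

namespace SL2Rep

variable {V W : Type*} [AddCommGroup V] [Module ℂ V] [AddCommGroup W] [Module ℂ W]

/-- The defining relations of an `sl₂`-triple. -/
def IsSl2Rep (ρ : SL2Rep V) : Prop :=
  ρ.H ∘ₗ ρ.X - ρ.X ∘ₗ ρ.H = (2:ℂ) • ρ.X ∧
  ρ.H ∘ₗ ρ.Y - ρ.Y ∘ₗ ρ.H = (-2:ℂ) • ρ.Y ∧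
  ρ.X ∘ₗ ρ.Y - ρ.Y ∘ₗ ρ.X = ρ.H

/-- The Casimir operator `Ω = H² + 2(XY + YX)`. -/
def casimir (ρ : SL2Rep V) : Module.End ℂ V :=
  ρ.H ∘ₗ ρ.H + (2:ℂ) • (ρ.X ∘ₗ ρ.Y + ρ.Y ∘ₗ ρ.X)

/-- The diagonal (coproduct) action on a tensor product. -/
def tensor (ρ : SL2Rep V) (σ : SL2Rep W) : SL2Rep (V ⊗[ℂ] W) where
  H := TensorProduct.map ρ.H LinearMap.id + TensorProduct.map LinearMap.id σ.H
  X := TensorProduct.map ρ.X LinearMap.id + TensorProduct.map LinearMap.id σ.X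
  Y := TensorProduct.map ρ.Y LinearMap.id + TensorProduct.map LinearMap.id σ.Y

end SL2Rep

/-- Matrix of `H` on the standard basis of the irreducible `(m+1)`-dimensional module. -/
def Hmat (m : ℕ) : Matrix (Fin (m+1)) (Fin (m+1)) ℂ :=
  Matrix.of fun i j => if i = j then ((m:ℂ) - 2 * ((i:ℕ):ℂ)) else 0

/-- Matrix of `X` (raising operator): `X e_j = j (m+1-j) e_(j-1)`. -/
def Xmat (m : ℕ) : Matrix (Fin (m+1)) (Fin (m+1)) ℂ :=
  Matrix.of fun i j => if (j:ℕ) = (i:ℕ) + 1 then ((j:ℕ):ℂ) * ((m:ℂ) + 1 - ((j:ℕ):ℂ)) else 0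

/-- Matrix of `Y` (lowering operator): `Y e_j = e_(j+1)`. -/
def Ymat (m : ℕ) : Matrix (Fin (m+1)) (Fin (m+1)) ℂ :=
  Matrix.of fun i j => if (i:ℕ) = (j:ℕ) + 1 then 1 else 0

/-- The irreducible `(m+1)`-dimensional representation `V_m` of `sl(2,ℂ)`. -/
def stdRep (m : ℕ) : SL2Rep (Fin (m+1) → ℂ) :=
  ⟨Matrix.toLin' (Hmat m), Matrix.toLin' (Xmat m), Matrix.toLin' (Ymat m)⟩

/-- The basis vector `f_ε` of `ℂ²`: `f₊` for `ε = 1`, `f₋` for `ε = -1`. -/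
def fvec (i : Fin (1+1)) : Fin (1+1) → ℂ := Pi.single i 1

/-- The coordinate projection of `ℂ²` onto the line `ℂ f_i`. -/
def prLine (i : Fin (1+1)) : Module.End ℂ (Fin (1+1) → ℂ) :=
  LinearMap.single ℂ (fun _ : Fin (1+1) => ℂ) i ∘ₗ LinearMap.proj i

theorem casimir_mat (m : ℕ) :
    Hmat m * Hmat m + (2:ℂ) • (Xmat m * Ymat m + Ymat m * Xmat m)
      = (((m:ℂ)+1)^2 - 1) • 1 := by
  ext i j
  simp only [Matrix.add_apply, Matrix.smul_apply, Matrix.mul_apply, Hmat, Xmat, Ymat,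
    Matrix.of_apply, Matrix.one_apply, smul_eq_mul, ite_mul, mul_ite, mul_zero, zero_mul, mul_one]
  by_cases hij : i = j
  · subst hij
    simp only [if_pos rfl, Finset.sum_ite_eq' Finset.univ, Finset.mem_univ, if_true]
    have h1 : ∑ x : Fin (m+1), (if (x:ℕ) = (i:ℕ) + 1 then (if (x:ℕ) = (i:ℕ) + 1 then ((x:ℕ):ℂ) * ((m:ℂ) + 1 - ((x:ℕ):ℂ)) else 0) else 0)
        = (((i:ℕ):ℂ)+1) * ((m:ℂ) - ((i:ℕ):ℂ)) := by
      rw [Fin.sum_univ_eq_sum_range (fun k => if k = (i:ℕ) + 1 then (if k = (i:ℕ) + 1 then ((k:ℕ):ℂ) * ((m:ℂ) + 1 - ((k:ℕ):ℂ)) else 0) else 0)]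
      rw [Finset.sum_ite_eq' (Finset.range (m+1))]
      rw [if_pos rfl]
      by_cases h : (i:ℕ)+1 ∈ Finset.range (m+1)
      · rw [if_pos h]; push_cast; ring
      · rw [if_neg h]
        have h3 : (i:ℕ) = m := by
          simp only [Finset.mem_range] at h; have := i.isLt; omega
        have h2 : ((i:ℕ):ℂ) = (m:ℂ) := by exact_mod_cast h3
        rw [h2]; ring
    have h2 : ∑ x : Fin (m+1), (if (i:ℕ) = (x:ℕ) + 1 then (if (i:ℕ) = (x:ℕ) + 1 then 1 * (((i:ℕ):ℂ) * ((m:ℂ) + 1 - ((i:ℕ):ℂ))) else 0) else 0)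
        = ((i:ℕ):ℂ) * ((m:ℂ) + 1 - ((i:ℕ):ℂ)) := by
      rw [Fin.sum_univ_eq_sum_range (fun k => if (i:ℕ) = k + 1 then (if (i:ℕ) = k + 1 then 1 * (((i:ℕ):ℂ) * ((m:ℂ) + 1 - ((i:ℕ):ℂ))) else 0) else 0)]
      rcases Nat.eq_zero_or_pos (i:ℕ) with h0 | h0
      · rw [Finset.sum_eq_zero]
        · rw [h0]; push_cast; ring
        · intro k _; simp [h0]
      · obtain ⟨b, hb⟩ : ∃ b, (i:ℕ) = b + 1 := ⟨(i:ℕ) - 1, by omega⟩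
        have hbm : b ∈ Finset.range (m+1) := by
          simp only [Finset.mem_range]; have := i.isLt; omega
        rw [Finset.sum_eq_single b]
        · simp [hb]
        · intro k _ hk; rw [if_neg (by omega)]
        · intro hnot; exact absurd hbm hnot
    rw [h1, h2]
    push_cast; ring
  · rw [if_neg hij]
    have e1 : ∑ x : Fin (m+1), (if x = j then (if i = x then ((m:ℂ) - 2 * ((i:ℕ):ℂ)) * ((m:ℂ) - 2 * ((x:ℕ):ℂ)) else 0) else 0) = 0 := by
      apply Finset.sum_eq_zero; intro k _
      split_ifs with h1 h2
      · exact absurd (h2.trans h1) hij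
      · rfl
      · rfl
    have e2 : ∑ x : Fin (m+1), (if (x:ℕ) = (j:ℕ) + 1 then (if (x:ℕ) = (i:ℕ) + 1 then ((x:ℕ):ℂ) * ((m:ℂ) + 1 - ((x:ℕ):ℂ)) else 0) else 0) = 0 := by
      apply Finset.sum_eq_zero; intro k _
      split_ifs with h1 h2
      · exact absurd (Fin.ext (by omega)) hij
      · rfl
      · rfl
    have e3 : ∑ x : Fin (m+1), (if (j:ℕ) = (x:ℕ) + 1 then (if (i:ℕ) = (x:ℕ) + 1 then 1 * (((j:ℕ):ℂ) * ((m:ℂ) + 1 - ((j:ℕ):ℂ))) else 0) else 0) = 0 := by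
      apply Finset.sum_eq_zero; intro k _
      split_ifs with h1 h2
      · exact absurd (Fin.ext (by omega)) hij
      · rfl
      · rfl
    rw [e1, e2, e3]; ring

theorem casimir_std (m : ℕ) :
    (stdRep m).casimir = (((m:ℂ)+1)^2 - 1) • (1 : Module.End ℂ (Fin (m+1) → ℂ)) := by
  have : (stdRep m).casimir
      = Matrix.toLin' (Hmat m * Hmat m + (2:ℂ) • (Xmat m * Ymat m + Ymat m * Xmat m)) := by
    simp only [SL2Rep.casimir, stdRep, map_add, map_smul, Matrix.toLin'_mul]
  rw [this, casimir_mat, map_smul, Matrix.toLin'_one]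
  rfl


set_option maxHeartbeats 1600000 in
/-- **Translation of symmetry breaking via `⊗ ℂ²`** for `Π = V_m`, `λ = m+1`:
`(T ⊗ pr_ε) ∘ pr_{λ→λ+δ}(u ⊗ f_ε) = ((λ + δ(1+εν))/(2λ)) (Tu) ⊗ f_ε`. -/
theorem translation_C2 (m : ℕ) (ν : ℂ)
    (T : (Fin (m+1) → ℂ) →ₗ[ℂ] ℂ)
    (hT : ∀ u, T ((stdRep m).H u) = ν * T u)
    (eps delta : ℂ) (heps : eps = 1 ∨ eps = -1) (hdelta : delta = 1 ∨ delta = -1)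
    (ieps : Fin (1+1)) (hieps : (eps = 1 ∧ ieps = 0) ∨ (eps = -1 ∧ ieps = 1))
    (P : Module.End ℂ ((Fin (m+1) → ℂ) ⊗[ℂ] (Fin (1+1) → ℂ)))
    (hPidem : P ∘ₗ P = P)
    (hPplus : ((stdRep m).tensor (stdRep 1)).casimir ∘ₗ P
        = ((((m:ℂ)+1) + delta)^2 - 1) • P)
    (hPminus : ((stdRep m).tensor (stdRep 1)).casimir ∘ₗ (1 - P)
        = ((((m:ℂ)+1) - delta)^2 - 1) • (1 - P))
    (u : Fin (m+1) → ℂ) :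
    TensorProduct.map T (prLine ieps) (P (u ⊗ₜ[ℂ] fvec ieps))
      = ((((m:ℂ)+1) + delta * (1 + eps * ν)) / (2 * ((m:ℂ)+1)))
          • ((T u) ⊗ₜ[ℂ] fvec ieps) := by
  have hlamne : ((m:ℂ) + 1) ≠ 0 := by exact_mod_cast Nat.succ_ne_zero m
  have hdne : delta ≠ 0 := by rcases hdelta with h | h <;> simp [h]
  have hcasT : ν * (ν * T u) + 2 * (T ((stdRep m).X ((stdRep m).Y u))
      + T ((stdRep m).Y ((stdRep m).X u))) = (((m:ℂ)+1)^2 - 1) * T u := by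
    have h0 := LinearMap.congr_fun (casimir_std m) u
    simp only [SL2Rep.casimir, LinearMap.add_apply, LinearMap.comp_apply,
      LinearMap.smul_apply, Module.End.one_apply, smul_eq_mul] at h0
    have h1 := congrArg T h0
    simp only [map_add, map_smul, hT, smul_eq_mul] at h1
    exact h1
  have eH0 : (stdRep 1).H (fvec 0) = fvec 0 := by
    funext x
    fin_cases x <;>
      simp [stdRep, Hmat, fvec, Matrix.toLin'_apply, Matrix.mulVec, dotProduct,
        Fin.sum_univ_two, Pi.single, Function.update]
  have eH1 : (stdRep 1).H (fvec 1) = -fvec 1 := by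
    funext x
    fin_cases x <;>
      simp [stdRep, Hmat, fvec, Matrix.toLin'_apply, Matrix.mulVec, dotProduct,
        Fin.sum_univ_two, Pi.single, Function.update, Fin.ext_iff] <;> norm_num
  have eX0 : (stdRep 1).X (fvec 0) = 0 := by
    funext x
    fin_cases x <;>
      simp [stdRep, Xmat, fvec, Matrix.toLin'_apply, Matrix.mulVec, dotProduct,
        Fin.sum_univ_two, Pi.single, Function.update]
  have eX1 : (stdRep 1).X (fvec 1) = fvec 0 := by
    funext x
    fin_cases x <;>
      simp [stdRep, Xmat, fvec, Matrix.toLin'_apply, Matrix.mulVec, dotProduct,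
        Fin.sum_univ_two, Pi.single, Function.update, Fin.ext_iff]
  have eY0 : (stdRep 1).Y (fvec 0) = fvec 1 := by
    funext x
    fin_cases x <;>
      simp [stdRep, Ymat, fvec, Matrix.toLin'_apply, Matrix.mulVec, dotProduct,
        Fin.sum_univ_two, Pi.single, Function.update]
  have eY1 : (stdRep 1).Y (fvec 1) = 0 := by
    funext x
    fin_cases x <;>
      simp [stdRep, Ymat, fvec, Matrix.toLin'_apply, Matrix.mulVec, dotProduct,
        Fin.sum_univ_two, Pi.single, Function.update]
  have ep00 : prLine 0 (fvec 0) = fvec 0 := by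
    funext x; fin_cases x <;> simp [prLine, fvec, Pi.single, Function.update, Fin.ext_iff]
  have ep01 : prLine 0 (fvec 1) = 0 := by
    funext x; fin_cases x <;> simp [prLine, fvec, Pi.single, Function.update, Fin.ext_iff]
  have ep10 : prLine 1 (fvec 0) = 0 := by
    funext x; fin_cases x <;> simp [prLine, fvec, Pi.single, Function.update, Fin.ext_iff]
  have ep11 : prLine 1 (fvec 1) = fvec 1 := by
    funext x; fin_cases x <;> simp [prLine, fvec, Pi.single, Function.update, Fin.ext_iff]
  have hS : TensorProduct.map T (prLine ieps)
        (((stdRep m).tensor (stdRep 1)).casimir (u ⊗ₜ[ℂ] fvec ieps))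
      = ((((m:ℂ)+1)^2 + 2 + 2*eps*ν) • ((T u) ⊗ₜ[ℂ] fvec ieps)) := by
    rcases hieps with ⟨he, hi⟩ | ⟨he, hi⟩ <;> subst he hi <;>
      simp only [SL2Rep.casimir, SL2Rep.tensor, LinearMap.add_apply,
        LinearMap.comp_apply, LinearMap.smul_apply, map_add, map_smul,
        TensorProduct.map_tmul, LinearMap.id_coe, id_eq,
        eH0, eH1, eX0, eX1, eY0, eY1, TensorProduct.tmul_zero, TensorProduct.zero_tmul,
        map_zero, add_zero, zero_add, TensorProduct.tmul_neg, TensorProduct.neg_tmul, map_neg,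
        ep00, ep01, ep10, ep11] <;>
    · apply (TensorProduct.lid ℂ (Fin (1+1) → ℂ)).injective
      simp only [map_add, map_neg, map_smul, TensorProduct.lid_tmul, hT]
      funext x
      fin_cases x <;>
        simp only [Pi.add_apply, Pi.neg_apply, Pi.smul_apply, fvec, Pi.single_apply,
          smul_eq_mul, Fin.ext_iff, Fin.isValue] <;>
        norm_num <;>
        linear_combination hcasT
  have hSw : TensorProduct.map T (prLine ieps) (u ⊗ₜ[ℂ] fvec ieps)
      = (T u) ⊗ₜ[ℂ] fvec ieps := by
    rcases hieps with ⟨_, hi⟩ | ⟨_, hi⟩ <;> subst hi <;>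
      simp [TensorProduct.map_tmul, ep00, ep11]
  have h1 : ((stdRep m).tensor (stdRep 1)).casimir (P (u ⊗ₜ[ℂ] fvec ieps))
      = ((((m:ℂ)+1) + delta)^2 - 1) • P (u ⊗ₜ[ℂ] fvec ieps) :=
    LinearMap.congr_fun hPplus (u ⊗ₜ[ℂ] fvec ieps)
  have h2 : ((stdRep m).tensor (stdRep 1)).casimir
        ((u ⊗ₜ[ℂ] fvec ieps) - P (u ⊗ₜ[ℂ] fvec ieps))
      = ((((m:ℂ)+1) - delta)^2 - 1) • ((u ⊗ₜ[ℂ] fvec ieps) - P (u ⊗ₜ[ℂ] fvec ieps)) := by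
    have h := LinearMap.congr_fun hPminus (u ⊗ₜ[ℂ] fvec ieps)
    simpa [LinearMap.sub_apply, Module.End.one_apply, LinearMap.smul_apply] using h
  have key : ((4:ℂ) * (((m:ℂ)+1)) * delta) • P (u ⊗ₜ[ℂ] fvec ieps)
      = ((stdRep m).tensor (stdRep 1)).casimir (u ⊗ₜ[ℂ] fvec ieps)
        - ((((m:ℂ)+1) - delta)^2 - 1) • (u ⊗ₜ[ℂ] fvec ieps) := by
    have hOw : ((stdRep m).tensor (stdRep 1)).casimir (u ⊗ₜ[ℂ] fvec ieps)
        = ((((m:ℂ)+1) + delta)^2 - 1) • P (u ⊗ₜ[ℂ] fvec ieps)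
          + ((((m:ℂ)+1) - delta)^2 - 1) • ((u ⊗ₜ[ℂ] fvec ieps) - P (u ⊗ₜ[ℂ] fvec ieps)) := by
      rw [← h1, ← h2, ← map_add]
      congr 1
      abel
    rw [hOw]
    module
  have h4 : ((4:ℂ) * (((m:ℂ)+1)) * delta) ≠ 0 := by
    simp only [mul_ne_zero_iff]
    exact ⟨⟨by norm_num, hlamne⟩, hdne⟩
  have key2 := congrArg (TensorProduct.map T (prLine ieps)) key
  rw [map_smul, map_sub, map_smul, hS, hSw] at key2
  have key3 := (eq_inv_smul_iff₀ h4).mpr key2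
  rw [key3]
  rcases hdelta with h | h <;> subst h <;> match_scalars <;> field_simp <;> ring
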